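/- arXiv:2408.01868 — 2 statements merged into one kernel-verified Lean document; each statement's English description precedes it below -/
import Mathlib

section
/- Let (Ω, 𝓕, P) be a probability space, p ≥ 1, π₀ a probability measure on ℝ^p with finite second moment, Δ_t and Δ_∞ be ℝ^p-valued random vectors, and r_t : ℝ^p × Ω → ℝ be jointly measurable with r_t(u) ≤ ‖Δ_t/2 − u‖² pointwise (so the exponents below are nonpositive). Define the random finite measures on ℝ^p: m_t(du) := exp(−‖Δ_t/2 − u‖² + r_t(u)) π₀(du) and m(du) := exp(−‖Δ_∞/2 − u‖²) π₀(du). Then E‖m_t − m‖_TV ≤ ε_Δ(t) + c · ε_Δ(t)^{1/2} + ε_r(t), where ε_Δ(t) := E‖(Δ_t − Δ_∞)/2‖², ε_r(t) := E ∫_{ℝ^p} |r_t(u)| π₀(du), and c := 2 · E[ ( ∫_{ℝ^p} ‖Δ_∞/2 − u‖ π₀(du) )² ]^{1/2} is a constant depending only on π₀ and the law of Δ_∞. -/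
open MeasureTheory Filter Set

set_option maxHeartbeats 1000000

/-- The total variation distance between two (finite) measures: the supremum over measurable
sets of the difference of the measures of the set. -/
noncomputable def tvDist {α : Type*} [MeasurableSpace α] (μ ν : Measure α) : ℝ :=
  ⨆ A : {s : Set α // MeasurableSet s}, |(μ A.1).toReal - (ν A.1).toReal|

lemma exp_abs_sub_le {x y : ℝ} (hx : x ≤ 0) (hy : y ≤ 0) :
    |Real.exp x - Real.exp y| ≤ |x - y| := by
  have key : ∀ a b : ℝ, a ≤ b → b ≤ 0 → Real.exp b - Real.exp a ≤ b - a := by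
    intro a b hab hb
    have h1 : Real.exp b * (1 + (a - b)) ≤ Real.exp a := by
      calc Real.exp b * (1 + (a - b)) ≤ Real.exp b * Real.exp (a - b) :=
            mul_le_mul_of_nonneg_left (by linarith [Real.add_one_le_exp (a - b)])
              (Real.exp_pos b).le
        _ = Real.exp a := by rw [← Real.exp_add]; ring_nf
    have h2 : Real.exp b ≤ 1 := Real.exp_le_one_iff.mpr hb
    nlinarith [Real.exp_pos b]
  rcases le_total x y with h | h
  · have h2 := Real.exp_le_exp.mpr h
    rw [abs_sub_comm (Real.exp x), abs_of_nonneg (sub_nonneg.2 h2), abs_sub_comm x,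
      abs_of_nonneg (sub_nonneg.2 h)]
    exact key x y h hy
  · have h2 := Real.exp_le_exp.mpr h
    rw [abs_of_nonneg (sub_nonneg.2 h2), abs_of_nonneg (sub_nonneg.2 h)]
    exact key y x h hx

lemma normsq_diff_le {E : Type*} [NormedAddCommGroup E] (x y : E) :
    |‖x‖ ^ 2 - ‖y‖ ^ 2| ≤ ‖x - y‖ ^ 2 + 2 * ‖x - y‖ * ‖y‖ := by
  have h1 : |‖x‖ - ‖y‖| ≤ ‖x - y‖ := abs_norm_sub_norm_le x y
  have h2 : ‖x‖ - ‖y‖ ≤ ‖x - y‖ := (le_abs_self _).trans h1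
  have h3 : ‖y‖ - ‖x‖ ≤ ‖x - y‖ := by
    have := (neg_abs_le (‖x‖ - ‖y‖)).trans (le_abs_self _) |>.trans h1
    linarith [abs_sub_comm ‖x‖ ‖y‖ ▸ h1, (neg_le_abs (‖x‖ - ‖y‖))]
  have hx := norm_nonneg x
  have hy := norm_nonneg y
  have hd := norm_nonneg (x - y)
  rw [abs_le]
  constructor <;> nlinarith

/-- On a probability space `(Ω, 𝓕, P)`, let `π₀` be a probability measure on `ℝ^p` with finite
second moment, let `Δ_t, Δ_∞ : Ω → ℝ^p` be random vectors, and let `r_t : ℝ^p × Ω → ℝ` be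
jointly measurable with `r_t(u) ≤ ‖Δ_t/2 − u‖²` pointwise. Define the random measures
`m_t(du) := exp(−‖Δ_t/2 − u‖² + r_t(u)) π₀(du)` and `m(du) := exp(−‖Δ_∞/2 − u‖²) π₀(du)`.
Then `E ‖m_t − m‖_TV ≤ ε_Δ + c ε_Δ^{1/2} + ε_r`, where
`ε_Δ := E ‖(Δ_t − Δ_∞)/2‖²`, `ε_r := E ∫ |r_t(u)| π₀(du)` and
`c := 2 E[(∫ ‖Δ_∞/2 − u‖ π₀(du))²]^{1/2}`. -/
theorem expected_tv_distance_bound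
    {p : ℕ} {Ω : Type*} [MeasurableSpace Ω]
    (P : Measure Ω) [IsProbabilityMeasure P]
    (π₀ : Measure (EuclideanSpace ℝ (Fin p))) [IsProbabilityMeasure π₀]
    (hmom : ∫⁻ u, (‖u‖₊ : ENNReal) ^ 2 ∂π₀ < ⊤)
    (Δt Δinf : Ω → EuclideanSpace ℝ (Fin p))
    (hΔt : Measurable Δt) (hΔinf : Measurable Δinf)
    (r : EuclideanSpace ℝ (Fin p) → Ω → ℝ)
    (hr : Measurable (Function.uncurry r))
    (hrle : ∀ u ω, r u ω ≤ ‖(1/2 : ℝ) • Δt ω - u‖ ^ 2)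
    (mt m : Ω → Measure (EuclideanSpace ℝ (Fin p)))
    (hmt : ∀ ω, mt ω = π₀.withDensity
      (fun u => ENNReal.ofReal (Real.exp (-‖(1/2 : ℝ) • Δt ω - u‖ ^ 2 + r u ω))))
    (hm : ∀ ω, m ω = π₀.withDensity
      (fun u => ENNReal.ofReal (Real.exp (-‖(1/2 : ℝ) • Δinf ω - u‖ ^ 2)))) :
    ∫⁻ ω, ENNReal.ofReal (tvDist (mt ω) (m ω)) ∂P ≤
      (∫⁻ ω, ENNReal.ofReal (‖(1/2 : ℝ) • (Δt ω - Δinf ω)‖ ^ 2) ∂P)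
      + (2 * (∫⁻ ω, ENNReal.ofReal ((∫ u, ‖(1/2 : ℝ) • Δinf ω - u‖ ∂π₀) ^ 2) ∂P) ^ (1/2 : ℝ))
        * (∫⁻ ω, ENNReal.ofReal (‖(1/2 : ℝ) • (Δt ω - Δinf ω)‖ ^ 2) ∂P) ^ (1/2 : ℝ)
      + ∫⁻ ω, (∫⁻ u, ENNReal.ofReal |r u ω| ∂π₀) ∂P := by
  classical
  have _dummy : True := trivial
  set δ : Ω → ℝ := fun ω => ‖(1/2 : ℝ) • (Δt ω - Δinf ω)‖ with hδdef
  set g : Ω → ℝ := fun ω => ∫ u, ‖(1/2 : ℝ) • Δinf ω - u‖ ∂π₀ with hgdef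
  have hδ0 : ∀ ω, 0 ≤ δ ω := fun ω => norm_nonneg _
  have hg0 : ∀ ω, 0 ≤ g ω := fun ω => integral_nonneg fun u => norm_nonneg _
  -- integrability of the norm
  have hnorm_int : Integrable (fun u : EuclideanSpace ℝ (Fin p) => ‖u‖) π₀ := by
    constructor
    · exact measurable_norm.aestronglyMeasurable
    · rw [HasFiniteIntegral]
      have hb : ∀ u : EuclideanSpace ℝ (Fin p), (‖‖u‖‖₊ : ENNReal) ≤ 1 + (‖u‖₊ : ENNReal) ^ 2 := by
        intro u
        rw [nnnorm_norm]
        rcases le_total ((‖u‖₊ : ENNReal)) 1 with h | h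
        · exact h.trans le_self_add
        · calc (‖u‖₊ : ENNReal) = ‖u‖₊ * 1 := (mul_one _).symm
            _ ≤ (‖u‖₊ : ENNReal) * ‖u‖₊ := mul_le_mul_right h _
            _ = (‖u‖₊ : ENNReal) ^ 2 := (sq _).symm
            _ ≤ 1 + _ := le_add_self
      calc ∫⁻ u, (‖‖u‖‖₊ : ENNReal) ∂π₀ ≤ ∫⁻ u, (1 + (‖u‖₊ : ENNReal) ^ 2) ∂π₀ :=
            lintegral_mono hb
        _ = 1 + ∫⁻ u, (‖u‖₊ : ENNReal) ^ 2 ∂π₀ := by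
            rw [lintegral_add_left measurable_const]; simp
        _ < ⊤ := ENNReal.add_lt_top.mpr ⟨ENNReal.one_lt_top, hmom⟩
  have hfint : ∀ ω, Integrable (fun u : EuclideanSpace ℝ (Fin p) => ‖(1/2 : ℝ) • Δinf ω - u‖) π₀ := by
    intro ω
    apply Integrable.mono' ((integrable_const ‖(1/2 : ℝ) • Δinf ω‖).add hnorm_int)
    · exact (continuous_const.sub continuous_id).norm.aestronglyMeasurable
    · filter_upwards with u
      rw [Real.norm_eq_abs, abs_of_nonneg (norm_nonneg _)]
      exact norm_sub_le _ _
  have hgeq : ∀ ω, ENNReal.ofReal (g ω) = ∫⁻ u, ENNReal.ofReal ‖(1/2 : ℝ) • Δinf ω - u‖ ∂π₀ :=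
    fun ω => ofReal_integral_eq_lintegral_ofReal (hfint ω)
      (Filter.Eventually.of_forall fun u => norm_nonneg _)
  -- measurabilities
  have mδ : Measurable δ := ((hΔt.sub hΔinf).const_smul (1/2 : ℝ)).norm
  have mg : Measurable g := by
    have : StronglyMeasurable fun q : Ω × EuclideanSpace ℝ (Fin p) => ‖(1/2 : ℝ) • Δinf q.1 - q.2‖ :=
      (((hΔinf.comp measurable_fst).const_smul (1/2 : ℝ)).sub measurable_snd).norm.stronglyMeasurable
    exact this.integral_prod_right'.measurable
  have mrω : ∀ ω, Measurable fun u => r u ω := by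
    intro ω
    exact hr.comp (measurable_id.prodMk measurable_const)
  have mC : Measurable fun ω => ∫⁻ u, ENNReal.ofReal |r u ω| ∂π₀ := by
    have : Measurable fun q : Ω × EuclideanSpace ℝ (Fin p) => ENNReal.ofReal |r q.2 q.1| :=
      ((hr.comp (measurable_snd.prodMk measurable_fst)).abs).ennreal_ofReal
    exact this.lintegral_prod_right'
  -- pointwise bound
  have key : ∀ ω, ENNReal.ofReal (tvDist (mt ω) (m ω)) ≤
      ENNReal.ofReal (δ ω ^ 2) + 2 * (ENNReal.ofReal (g ω) * ENNReal.ofReal (δ ω))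
        + ∫⁻ u, ENNReal.ofReal |r u ω| ∂π₀ := by
    intro ω
    set a : EuclideanSpace ℝ (Fin p) → ℝ := fun u => ‖(1/2 : ℝ) • Δt ω - u‖ ^ 2 with hadef
    set b : EuclideanSpace ℝ (Fin p) → ℝ := fun u => ‖(1/2 : ℝ) • Δinf ω - u‖ ^ 2 with hbdef
    set dd : EuclideanSpace ℝ (Fin p) → ENNReal := fun u =>
      ENNReal.ofReal |Real.exp (-a u + r u ω) - Real.exp (-b u)| with hdddef
    have ha0 : ∀ u, -a u + r u ω ≤ 0 := fun u => by
      have := hrle u ω; simp only [hadef]; linarith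
    have hb0 : ∀ u, -b u ≤ (0:ℝ) := fun u => neg_nonpos.mpr (by positivity)
    have mdd : Measurable dd := by
      apply Measurable.ennreal_ofReal
      apply Measurable.abs
      apply Measurable.sub
      · exact (((((continuous_const.sub continuous_id).norm.measurable.pow_const 2).neg).add
          (mrω ω)).exp)
      · exact ((continuous_const.sub continuous_id).norm.measurable.pow_const 2).neg.exp
    set D : ENNReal := ∫⁻ u, dd u ∂π₀ with hDdef
    have hD1 : D ≤ 1 := by
      calc D ≤ ∫⁻ _, (1 : ENNReal) ∂π₀ := by
            apply lintegral_mono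
            intro u
            rw [show (1 : ENNReal) = ENNReal.ofReal 1 by simp]
            apply ENNReal.ofReal_le_ofReal
            rw [abs_le]
            constructor
            · have := Real.exp_pos (-a u + r u ω)
              have := Real.exp_le_one_iff.mpr (hb0 u)
              linarith
            · have := Real.exp_pos (-b u)
              have := Real.exp_le_one_iff.mpr (ha0 u)
              linarith
        _ = 1 := by simp
    have hDne : D ≠ ⊤ := (hD1.trans_lt ENNReal.one_lt_top).ne
    have htv : tvDist (mt ω) (m ω) ≤ D.toReal := by
      apply Real.iSup_le _ ENNReal.toReal_nonneg
      rintro ⟨A, hA⟩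
      have hmtA : mt ω A = ∫⁻ u in A, ENNReal.ofReal (Real.exp (-a u + r u ω)) ∂π₀ := by
        rw [hmt ω, withDensity_apply _ hA]
      have hmA : m ω A = ∫⁻ u in A, ENNReal.ofReal (Real.exp (-b u)) ∂π₀ := by
        rw [hm ω, withDensity_apply _ hA]
      have hle1 : ∀ (f h : EuclideanSpace ℝ (Fin p) → ℝ),
          (∀ u, Real.exp (f u) ≤ Real.exp (h u) + |Real.exp (-a u + r u ω) - Real.exp (-b u)|) →
          (∫⁻ u in A, ENNReal.ofReal (Real.exp (f u)) ∂π₀) ≤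
            (∫⁻ u in A, ENNReal.ofReal (Real.exp (h u)) ∂π₀) + D := by
        intro f h hfh
        calc (∫⁻ u in A, ENNReal.ofReal (Real.exp (f u)) ∂π₀)
            ≤ ∫⁻ u in A, (ENNReal.ofReal (Real.exp (h u)) + dd u) ∂π₀ := by
              apply lintegral_mono
              intro u
              calc ENNReal.ofReal (Real.exp (f u))
                  ≤ ENNReal.ofReal (Real.exp (h u) + |Real.exp (-a u + r u ω) - Real.exp (-b u)|) :=
                    ENNReal.ofReal_le_ofReal (hfh u)
                _ = _ := ENNReal.ofReal_add (Real.exp_pos _).le (abs_nonneg _)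
          _ = (∫⁻ u in A, ENNReal.ofReal (Real.exp (h u)) ∂π₀) + ∫⁻ u in A, dd u ∂π₀ :=
              lintegral_add_right _ mdd
          _ ≤ _ := add_le_add le_rfl (setLIntegral_le_lintegral _ _)
      have h1 : mt ω A ≤ m ω A + D := by
        rw [hmtA, hmA]
        exact hle1 _ _ fun u => by
          have := le_abs_self (Real.exp (-a u + r u ω) - Real.exp (-b u)); linarith
      have h2 : m ω A ≤ mt ω A + D := by
        rw [hmtA, hmA]
        exact hle1 _ _ fun u => by
          have := neg_abs_le (Real.exp (-a u + r u ω) - Real.exp (-b u)); linarith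
      have hfin : ∀ (f : EuclideanSpace ℝ (Fin p) → ℝ), (∀ u, f u ≤ 0) →
          (∫⁻ u in A, ENNReal.ofReal (Real.exp (f u)) ∂π₀) ≠ ⊤ := by
        intro f hf
        apply ne_of_lt
        calc (∫⁻ u in A, ENNReal.ofReal (Real.exp (f u)) ∂π₀)
            ≤ ∫⁻ _ in A, (1 : ENNReal) ∂π₀ := by
              apply lintegral_mono
              intro u
              rw [show (1 : ENNReal) = ENNReal.ofReal 1 by simp]
              exact ENNReal.ofReal_le_ofReal (Real.exp_le_one_iff.mpr (hf u))
          _ ≤ 1 := by simp [prob_le_one]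
          _ < ⊤ := ENNReal.one_lt_top
      have hmtne : mt ω A ≠ ⊤ := hmtA ▸ hfin _ ha0
      have hmne : m ω A ≠ ⊤ := hmA ▸ hfin _ hb0
      rw [abs_sub_le_iff]
      constructor
      · have := ENNReal.toReal_mono (by finiteness) h1
        rw [ENNReal.toReal_add hmne hDne] at this
        linarith
      · have := ENNReal.toReal_mono (by finiteness) h2
        rw [ENNReal.toReal_add hmtne hDne] at this
        linarith
    calc ENNReal.ofReal (tvDist (mt ω) (m ω)) ≤ ENNReal.ofReal D.toReal :=
          ENNReal.ofReal_le_ofReal htv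
      _ = D := ENNReal.ofReal_toReal hDne
      _ ≤ ∫⁻ u, (ENNReal.ofReal (δ ω ^ 2)
            + ENNReal.ofReal (2 * δ ω) * ENNReal.ofReal ‖(1/2 : ℝ) • Δinf ω - u‖
            + ENNReal.ofReal |r u ω|) ∂π₀ := by
          apply lintegral_mono
          intro u
          have hptwise : |Real.exp (-a u + r u ω) - Real.exp (-b u)| ≤
              δ ω ^ 2 + 2 * δ ω * ‖(1/2 : ℝ) • Δinf ω - u‖ + |r u ω| := by
            have hexp := exp_abs_sub_le (ha0 u) (hb0 u)
            have hsub : ((1/2 : ℝ) • Δt ω - u) - ((1/2 : ℝ) • Δinf ω - u)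
                = (1/2 : ℝ) • (Δt ω - Δinf ω) := by
              rw [smul_sub]; abel
            have hnorm := normsq_diff_le ((1/2 : ℝ) • Δt ω - u) ((1/2 : ℝ) • Δinf ω - u)
            rw [hsub] at hnorm
            have habs : |(-a u + r u ω) - (-b u)| ≤ |r u ω| + |a u - b u| := by
              have : (-a u + r u ω) - (-b u) = r u ω + (b u - a u) := by ring
              rw [this]
              refine (abs_add_le _ _).trans ?_
              rw [abs_sub_comm (b u) (a u)]
            refine hexp.trans (habs.trans ?_)
            simp only [hadef, hbdef, hδdef] at *
            linarith
          calc ENNReal.ofReal |Real.exp (-a u + r u ω) - Real.exp (-b u)|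
              ≤ ENNReal.ofReal (δ ω ^ 2 + 2 * δ ω * ‖(1/2 : ℝ) • Δinf ω - u‖ + |r u ω|) :=
                ENNReal.ofReal_le_ofReal hptwise
            _ = _ := by
                rw [ENNReal.ofReal_add (by positivity) (abs_nonneg _),
                  ENNReal.ofReal_add (by positivity) (by positivity),
                  ENNReal.ofReal_mul (by positivity)]
      _ = ENNReal.ofReal (δ ω ^ 2) + 2 * (ENNReal.ofReal (g ω) * ENNReal.ofReal (δ ω))
            + ∫⁻ u, ENNReal.ofReal |r u ω| ∂π₀ := by
          have mnorm : Measurable fun u : EuclideanSpace ℝ (Fin p) =>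
              ENNReal.ofReal ‖(1/2 : ℝ) • Δinf ω - u‖ :=
            (measurable_const.sub measurable_id).norm.ennreal_ofReal
          rw [lintegral_add_right _ ((mrω ω).abs.ennreal_ofReal),
            lintegral_add_right _ (mnorm.const_mul _),
            lintegral_const, measure_univ, mul_one,
            lintegral_const_mul _ mnorm, ← hgeq ω]
          congr 1
          rw [ENNReal.ofReal_mul (by norm_num : (0:ℝ) ≤ 2), ENNReal.ofReal_ofNat]
          ring
  -- integrate
  have step : ∫⁻ ω, ENNReal.ofReal (tvDist (mt ω) (m ω)) ∂P ≤
      (∫⁻ ω, ENNReal.ofReal (δ ω ^ 2) ∂P)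
      + 2 * ∫⁻ ω, ENNReal.ofReal (g ω) * ENNReal.ofReal (δ ω) ∂P
      + ∫⁻ ω, (∫⁻ u, ENNReal.ofReal |r u ω| ∂π₀) ∂P := by
    calc ∫⁻ ω, ENNReal.ofReal (tvDist (mt ω) (m ω)) ∂P
        ≤ ∫⁻ ω, (ENNReal.ofReal (δ ω ^ 2)
            + 2 * (ENNReal.ofReal (g ω) * ENNReal.ofReal (δ ω))
            + ∫⁻ u, ENNReal.ofReal |r u ω| ∂π₀) ∂P := lintegral_mono key
      _ = _ := by
          rw [lintegral_add_right _ mC,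
            lintegral_add_right _ ((show Measurable fun ω => ENNReal.ofReal (g ω) * ENNReal.ofReal (δ ω) from
              mg.ennreal_ofReal.mul mδ.ennreal_ofReal).const_mul _),
            lintegral_const_mul _ (show Measurable fun ω => ENNReal.ofReal (g ω) * ENNReal.ofReal (δ ω) from
              mg.ennreal_ofReal.mul mδ.ennreal_ofReal)]
  refine step.trans ?_
  have CS : (∫⁻ ω, ENNReal.ofReal (g ω) * ENNReal.ofReal (δ ω) ∂P) ≤
      (∫⁻ ω, ENNReal.ofReal (g ω ^ 2) ∂P) ^ (1/2:ℝ) *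
      (∫⁻ ω, ENNReal.ofReal (δ ω ^ 2) ∂P) ^ (1/2:ℝ) := by
    have holder := ENNReal.lintegral_mul_le_Lp_mul_Lq P
      Real.HolderConjugate.two_two
      mg.ennreal_ofReal.aemeasurable mδ.ennreal_ofReal.aemeasurable
    simp only [Pi.mul_apply] at holder
    have e1 : ∫⁻ ω, ENNReal.ofReal (g ω) ^ (2:ℝ) ∂P = ∫⁻ ω, ENNReal.ofReal (g ω ^ 2) ∂P := by
      apply lintegral_congr; intro ω
      rw [← Real.rpow_natCast (g ω) 2,
        ← ENNReal.ofReal_rpow_of_nonneg (hg0 ω) (by norm_num : (0:ℝ) ≤ (2:ℕ))]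
      norm_num
    have e2 : ∫⁻ ω, ENNReal.ofReal (δ ω) ^ (2:ℝ) ∂P = ∫⁻ ω, ENNReal.ofReal (δ ω ^ 2) ∂P := by
      apply lintegral_congr; intro ω
      rw [← Real.rpow_natCast (δ ω) 2,
        ← ENNReal.ofReal_rpow_of_nonneg (hδ0 ω) (by norm_num : (0:ℝ) ≤ (2:ℕ))]
      norm_num
    rw [e1, e2] at holder
    exact holder
  calc (∫⁻ ω, ENNReal.ofReal (δ ω ^ 2) ∂P)
      + 2 * ∫⁻ ω, ENNReal.ofReal (g ω) * ENNReal.ofReal (δ ω) ∂P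
      + ∫⁻ ω, (∫⁻ u, ENNReal.ofReal |r u ω| ∂π₀) ∂P
      ≤ (∫⁻ ω, ENNReal.ofReal (δ ω ^ 2) ∂P)
        + 2 * ((∫⁻ ω, ENNReal.ofReal (g ω ^ 2) ∂P) ^ (1/2:ℝ) *
          (∫⁻ ω, ENNReal.ofReal (δ ω ^ 2) ∂P) ^ (1/2:ℝ))
        + ∫⁻ ω, (∫⁻ u, ENNReal.ofReal |r u ω| ∂π₀) ∂P := by gcongr
    _ = _ := by ring
end

section
/- Let (X_s)_{s≥0} be a jointly measurable E-valued stochastic process on a probability space (Ω, 𝓕, P), let μ be a probability measure on E, and suppose there are constants k, γ > 0 with ‖ law(X_s) − μ ‖_TV ≤ k e^{−γ s} for all s ≥ 0. Let g : E → ℝ be a bounded measurable function with ∫_E g dμ = 0. Then for every t > 0, | E[ (1/t) ∫_0^t g(X_s) ds ] | ≤ 2 ‖g‖_∞ k (1 − e^{−γ t}) / (γ t); in particular the left-hand side is at most 2‖g‖_∞ k / (γ t). -/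
open MeasureTheory Filter

lemma abs_measure_sub_le_tvDist {α : Type*} [MeasurableSpace α] (μ ν : Measure α)
    [IsProbabilityMeasure μ] [IsProbabilityMeasure ν] {A : Set α} (hA : MeasurableSet A) :
    |(μ A).toReal - (ν A).toReal| ≤ tvDist μ ν := by
  have hbdd : BddAbove (Set.range fun A : {s : Set α // MeasurableSet s} =>
      |(μ A.1).toReal - (ν A.1).toReal|) := by
    refine ⟨2, ?_⟩
    rintro x ⟨B, rfl⟩
    have h1 : (μ B.1).toReal ≤ 1 := by
      have := prob_le_one (μ := μ) (s := B.1)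
      simpa using ENNReal.toReal_mono (by simp) this
    have h2 : (ν B.1).toReal ≤ 1 := by
      have := prob_le_one (μ := ν) (s := B.1)
      simpa using ENNReal.toReal_mono (by simp) this
    have h3 : (0:ℝ) ≤ (μ B.1).toReal := ENNReal.toReal_nonneg
    have h4 : (0:ℝ) ≤ (ν B.1).toReal := ENNReal.toReal_nonneg
    rw [abs_sub_le_iff]; constructor <;> linarith
  exact le_ciSup hbdd ⟨A, hA⟩

lemma integral_le_add_tvDist {α : Type*} [MeasurableSpace α] (P Q : Measure α)
    [IsProbabilityMeasure P] [IsProbabilityMeasure Q] {f : α → ℝ} (hf : Measurable f)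
    {B : ℝ} (hB : 0 ≤ B) (h0 : ∀ x, 0 ≤ f x) (h1 : ∀ x, f x ≤ B) :
    ∫ x, f x ∂P ≤ ∫ x, f x ∂Q + B * tvDist P Q := by
  obtain ⟨A, hA, hA1, hA2⟩ := hahn_decomposition (μ := P) (ν := Q)
  set F : α → ENNReal := fun x => ENNReal.ofReal (f x) with hF
  have hQP : Q.restrict A ≤ P.restrict A := by
    refine Measure.le_iff.2 fun s hs => ?_
    rw [Measure.restrict_apply hs, Measure.restrict_apply hs]
    exact hA1 _ (hs.inter hA) Set.inter_subset_right
  have hPQ : P.restrict Aᶜ ≤ Q.restrict Aᶜ := by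
    refine Measure.le_iff.2 fun s hs => ?_
    rw [Measure.restrict_apply hs, Measure.restrict_apply hs]
    exact hA2 _ (hs.inter hA.compl) Set.inter_subset_right
  have hsub : (P.restrict A - Q.restrict A) Set.univ = P A - Q A := by
    rw [Measure.sub_apply MeasurableSet.univ hQP]
    simp
  have key : ∫⁻ x, F x ∂P ≤ ENNReal.ofReal B * (P A - Q A) + ∫⁻ x, F x ∂Q := by
    have e1 : ∫⁻ x, F x ∂P = ∫⁻ x in A, F x ∂P + ∫⁻ x in Aᶜ, F x ∂P :=
      (lintegral_add_compl F hA).symm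
    have e2 : ∫⁻ x in A, F x ∂P =
        ∫⁻ x, F x ∂(P.restrict A - Q.restrict A) + ∫⁻ x in A, F x ∂Q := by
      conv_lhs => rw [← Measure.sub_add_cancel_of_le hQP]
      rw [lintegral_add_measure]
    have e3 : ∫⁻ x, F x ∂(P.restrict A - Q.restrict A) ≤ ENNReal.ofReal B * (P A - Q A) := by
      calc ∫⁻ x, F x ∂(P.restrict A - Q.restrict A)
          ≤ ∫⁻ _, ENNReal.ofReal B ∂(P.restrict A - Q.restrict A) :=
            lintegral_mono fun x => ENNReal.ofReal_le_ofReal (h1 x)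
        _ = ENNReal.ofReal B * (P A - Q A) := by rw [lintegral_const, hsub]
    have e4 : ∫⁻ x in Aᶜ, F x ∂P ≤ ∫⁻ x in Aᶜ, F x ∂Q := lintegral_mono' hPQ le_rfl
    calc ∫⁻ x, F x ∂P = ∫⁻ x in A, F x ∂P + ∫⁻ x in Aᶜ, F x ∂P := e1
      _ ≤ (ENNReal.ofReal B * (P A - Q A) + ∫⁻ x in A, F x ∂Q) + ∫⁻ x in Aᶜ, F x ∂Q := by
          rw [e2]; gcongr
      _ = ENNReal.ofReal B * (P A - Q A) + ∫⁻ x, F x ∂Q := by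
          rw [add_assoc, lintegral_add_compl F hA]
  have hPeq : ∫ x, f x ∂P = (∫⁻ x, F x ∂P).toReal :=
    integral_eq_lintegral_of_nonneg_ae (Filter.Eventually.of_forall h0)
      hf.aestronglyMeasurable
  have hQeq : ∫ x, f x ∂Q = (∫⁻ x, F x ∂Q).toReal :=
    integral_eq_lintegral_of_nonneg_ae (Filter.Eventually.of_forall h0)
      hf.aestronglyMeasurable
  have hQfin : ∫⁻ x, F x ∂Q ≠ ⊤ := by
    refine ne_of_lt (lt_of_le_of_lt (lintegral_mono fun x =>
      ENNReal.ofReal_le_ofReal (h1 x)) ?_)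
    simp [lintegral_const]
  have hRfin : ENNReal.ofReal B * (P A - Q A) + ∫⁻ x, F x ∂Q ≠ ⊤ := by
    apply ENNReal.add_ne_top.2
    refine ⟨?_, hQfin⟩
    exact ENNReal.mul_ne_top ENNReal.ofReal_ne_top
      (ne_of_lt (lt_of_le_of_lt (tsub_le_self.trans (prob_le_one)) ENNReal.one_lt_top))
  have h5 : (∫⁻ x, F x ∂P).toReal ≤
      (ENNReal.ofReal B * (P A - Q A) + ∫⁻ x, F x ∂Q).toReal :=
    ENNReal.toReal_mono hRfin key
  rw [hPeq, hQeq]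
  have h6 : (ENNReal.ofReal B * (P A - Q A) + ∫⁻ x, F x ∂Q).toReal =
      B * (P A - Q A).toReal + (∫⁻ x, F x ∂Q).toReal := by
    rw [ENNReal.toReal_add (ENNReal.mul_ne_top ENNReal.ofReal_ne_top
      (ne_of_lt (lt_of_le_of_lt (tsub_le_self.trans (prob_le_one)) ENNReal.one_lt_top))) hQfin,
      ENNReal.toReal_mul, ENNReal.toReal_ofReal hB]
  have h7 : (P A - Q A).toReal ≤ |(P A).toReal - (Q A).toReal| := by
    rcases le_total (Q A) (P A) with h | h
    · rw [ENNReal.toReal_sub_of_le h (measure_ne_top _ _)]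
      exact le_abs_self _
    · rw [tsub_eq_zero_of_le h]; simp [abs_nonneg]
  have h8 : B * (P A - Q A).toReal ≤ B * tvDist P Q :=
    mul_le_mul_of_nonneg_left (h7.trans (abs_measure_sub_le_tvDist P Q hA)) hB
  linarith [h5, h6 ▸ h5]

lemma abs_integral_sub_le_tvDist {α : Type*} [MeasurableSpace α] (P Q : Measure α)
    [IsProbabilityMeasure P] [IsProbabilityMeasure Q] {g : α → ℝ} (hg : Measurable g)
    {C : ℝ} (hgC : ∀ x, |g x| ≤ C) :
    |∫ x, g x ∂P - ∫ x, g x ∂Q| ≤ 2 * C * tvDist P Q := by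
  obtain ⟨x₀, -⟩ := nonempty_of_measure_ne_zero (μ := P) (s := Set.univ)
    (by simp : P Set.univ ≠ 0)
  have hC : 0 ≤ C := le_trans (abs_nonneg _) (hgC x₀)
  have hb1 : ∀ x, |g x + C| ≤ 2 * C := fun x => by
    have := abs_le.1 (hgC x); rw [abs_le]; constructor <;> linarith
  have hint : ∀ (ν : Measure α) [IsProbabilityMeasure ν], Integrable g ν := by
    intro ν _
    refine Integrable.mono' (integrable_const C) hg.aestronglyMeasurable ?_
    exact Filter.Eventually.of_forall fun x => by simpa using hgC x
  have key1 : ∫ x, g x ∂P - ∫ x, g x ∂Q ≤ 2 * C * tvDist P Q := by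
    have := integral_le_add_tvDist P Q (f := fun x => g x + C) (hg.add_const C)
      (by positivity : (0:ℝ) ≤ 2 * C)
      (fun x => by have h := abs_le.1 (hgC x); linarith [h.1, h.2])
      (fun x => by have h := abs_le.1 (hgC x); linarith [h.1, h.2])
    rw [integral_add (hint P) (integrable_const C),
        integral_add (hint Q) (integrable_const C)] at this
    simp only [integral_const, Measure.real, measure_univ, ENNReal.toReal_one, one_smul, smul_eq_mul] at this
    linarith
  have key2 : ∫ x, g x ∂Q - ∫ x, g x ∂P ≤ 2 * C * tvDist P Q := by
    have := integral_le_add_tvDist P Q (f := fun x => C - g x) (measurable_const.sub hg)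
      (by positivity : (0:ℝ) ≤ 2 * C)
      (fun x => by have h := abs_le.1 (hgC x); linarith [h.1, h.2])
      (fun x => by have h := abs_le.1 (hgC x); linarith [h.1, h.2])
    rw [integral_sub (integrable_const C) (hint P),
        integral_sub (integrable_const C) (hint Q)] at this
    simp only [integral_const, Measure.real, measure_univ, ENNReal.toReal_one, one_smul, smul_eq_mul] at this
    linarith
  rw [abs_sub_le_iff]
  exact ⟨key1, key2⟩

/-- Let `(X_s)_{s ≥ 0}` be a jointly measurable `S`-valued process on a probability space
`(Ω, 𝓕, P)`, let `μ` be a probability measure on `S`, and suppose that for constants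
`k, γ > 0` one has `‖law(X_s) − μ‖_TV ≤ k e^{−γ s}` for all `s ≥ 0`. Let `g : S → ℝ` be a
bounded measurable function (with bound `C`) satisfying `∫ g dμ = 0`. Then for every `t > 0`,
`|E[(1/t) ∫₀ᵗ g(X_s) ds]| ≤ 2 C k (1 − e^{−γ t})/(γ t)`, and in particular the left-hand
side is at most `2 C k/(γ t)`. -/
theorem time_average_bound_of_uniform_ergodicity
    {Ω S : Type*} [MeasurableSpace Ω] [MeasurableSpace S]
    (P : Measure Ω) [IsProbabilityMeasure P]
    (X : ℝ → Ω → S) (hX : Measurable (Function.uncurry X))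
    (μ : Measure S) [IsProbabilityMeasure μ]
    (k γ : ℝ) (hk : 0 < k) (hγ : 0 < γ)
    (htv : ∀ s : ℝ, 0 ≤ s → tvDist (P.map (X s)) μ ≤ k * Real.exp (-γ * s))
    (g : S → ℝ) (hg : Measurable g)
    (C : ℝ) (hgC : ∀ x, |g x| ≤ C)
    (hgmean : ∫ x, g x ∂μ = 0) :
    ∀ t : ℝ, 0 < t →
      |∫ ω, (1 / t) * (∫ s in (0:ℝ)..t, g (X s ω)) ∂P| ≤
          2 * C * k * (1 - Real.exp (-γ * t)) / (γ * t) ∧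
        |∫ ω, (1 / t) * (∫ s in (0:ℝ)..t, g (X s ω)) ∂P| ≤ 2 * C * k / (γ * t) := by
  intro t ht
  obtain ⟨x₀, -⟩ := nonempty_of_measure_ne_zero (μ := μ) (s := Set.univ)
    (by simp : μ Set.univ ≠ 0)
  have hC : 0 ≤ C := le_trans (abs_nonneg _) (hgC x₀)
  have hXs : ∀ s : ℝ, Measurable (X s) := fun s => hX.comp measurable_prodMk_left
  -- pointwise-in-time bound
  have hbound : ∀ s : ℝ, 0 ≤ s → |∫ ω, g (X s ω) ∂P| ≤ 2 * C * (k * Real.exp (-γ * s)) := by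
    intro s hs
    haveI := Measure.isProbabilityMeasure_map (μ := P) (hXs s).aemeasurable
    have hmap : ∫ ω, g (X s ω) ∂P = ∫ x, g x ∂(P.map (X s)) :=
      (integral_map (hXs s).aemeasurable hg.aestronglyMeasurable).symm
    have h1 := abs_integral_sub_le_tvDist (P.map (X s)) μ hg hgC
    rw [hgmean, sub_zero] at h1
    rw [hmap]
    calc |∫ x, g x ∂(P.map (X s))| ≤ 2 * C * tvDist (P.map (X s)) μ := h1
      _ ≤ 2 * C * (k * Real.exp (-γ * s)) :=
          mul_le_mul_of_nonneg_left (htv s hs) (by positivity)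
  -- Fubini setup
  set ν : Measure ℝ := volume.restrict (Set.Ioc (0:ℝ) t) with hν
  haveI : IsFiniteMeasure ν := by
    constructor
    rw [hν, Measure.restrict_apply MeasurableSet.univ, Set.univ_inter, Real.volume_Ioc]
    exact ENNReal.ofReal_lt_top
  have hFmeas : Measurable (Function.uncurry fun s ω => g (X s ω)) := hg.comp hX
  have hFint : Integrable (Function.uncurry fun s ω => g (X s ω)) (ν.prod P) := by
    refine Integrable.mono' (integrable_const C) hFmeas.aestronglyMeasurable ?_
    exact Filter.Eventually.of_forall fun p => by simpa [Function.uncurry] using hgC (X p.1 p.2)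
  have hswap := integral_integral_swap hFint
  -- rewrite the interval integral as an integral against ν
  have hrw : ∀ ω, ∫ s in (0:ℝ)..t, g (X s ω) = ∫ s, g (X s ω) ∂ν := fun ω =>
    intervalIntegral.integral_of_le ht.le
  have hmain : ∫ ω, (1 / t) * (∫ s in (0:ℝ)..t, g (X s ω)) ∂P =
      (1 / t) * ∫ s, ∫ ω, g (X s ω) ∂P ∂ν := by
    rw [integral_const_mul]
    congr 1
    rw [hswap]
    exact integral_congr_ae (Filter.Eventually.of_forall fun ω => by dsimp only; rw [hrw ω])
  -- exponential integral
  have hexp : ∫ s in (0:ℝ)..t, Real.exp (-γ * s) = (1 - Real.exp (-γ * t)) / γ := by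
    rw [intervalIntegral.integral_comp_mul_left (fun x => Real.exp x)
      (neg_ne_zero.2 hγ.ne')]
    simp only [mul_zero, integral_exp, smul_eq_mul, Real.exp_zero]
    rw [eq_div_iff hγ.ne']
    linear_combination (1 - Real.exp (-γ * t)) * mul_inv_cancel₀ hγ.ne'
  have hexp' : ∫ s, Real.exp (-γ * s) ∂ν = (1 - Real.exp (-γ * t)) / γ := by
    rw [← hexp, intervalIntegral.integral_of_le ht.le]
  have hbint : Integrable (fun s => 2 * C * (k * Real.exp (-γ * s))) ν := by
    apply Continuous.integrableOn_Ioc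
    continuity
  have hnorm : |∫ s, ∫ ω, g (X s ω) ∂P ∂ν| ≤ 2 * C * k * (1 - Real.exp (-γ * t)) / γ := by
    have hb : ∀ᵐ s ∂ν, ‖∫ ω, g (X s ω) ∂P‖ ≤ 2 * C * (k * Real.exp (-γ * s)) := by
      rw [hν, ae_restrict_iff' measurableSet_Ioc]
      exact Filter.Eventually.of_forall fun s hs => by
        rw [Real.norm_eq_abs]; exact hbound s hs.1.le
    have := norm_integral_le_of_norm_le hbint hb
    rw [Real.norm_eq_abs] at this
    calc |∫ s, ∫ ω, g (X s ω) ∂P ∂ν| ≤ ∫ s, 2 * C * (k * Real.exp (-γ * s)) ∂ν := this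
      _ = 2 * C * k * ∫ s, Real.exp (-γ * s) ∂ν := by
          rw [← integral_const_mul]; congr 1; ext s; ring
      _ = 2 * C * k * (1 - Real.exp (-γ * t)) / γ := by rw [hexp']; ring
  have hexple : Real.exp (-γ * t) ≤ 1 := by
    rw [← Real.exp_zero]
    exact Real.exp_le_exp.2 (by nlinarith)
  have first : |∫ ω, (1 / t) * (∫ s in (0:ℝ)..t, g (X s ω)) ∂P| ≤
      2 * C * k * (1 - Real.exp (-γ * t)) / (γ * t) := by
    rw [hmain, abs_mul, abs_of_pos (by positivity : (0:ℝ) < 1 / t)]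
    calc (1 / t) * |∫ s, ∫ ω, g (X s ω) ∂P ∂ν| ≤
        (1 / t) * (2 * C * k * (1 - Real.exp (-γ * t)) / γ) :=
          mul_le_mul_of_nonneg_left hnorm (by positivity)
      _ = 2 * C * k * (1 - Real.exp (-γ * t)) / (γ * t) := by
          rw [div_mul_div_comm, one_mul, mul_comm t γ]
  refine ⟨first, first.trans ?_⟩
  rw [div_le_div_iff₀ (by positivity) (by positivity)]
  have h9 : 0 ≤ 2 * C * k * Real.exp (-γ * t) * (γ * t) := by positivity
  have h10 : 2 * C * k * (1 - Real.exp (-γ * t)) * (γ * t) =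
      2 * C * k * (γ * t) - 2 * C * k * Real.exp (-γ * t) * (γ * t) := by ring
  linarith
end
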